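/- For every natural number n and all convex subsets x, y_1, …, y_{n+2} of ℝⁿ, one has ⋂_{i=1}^{n+2} convexHull(x ∪ y_i) ⊆ convexHull(x ∪ ⋃_{(I₁,I₂)} (convexHull(⋃_{i∈I₁} y_i) ∩ convexHull(⋃_{i∈I₂} y_i))), where the union ⋃_{(I₁,I₂)} is taken over all ordered pairs (I₁, I₂) of nonempty disjoint subsets of the index set {1, …, n+2} whose union is the whole index set. -/

import Mathlib

/-- Radon-type identity (x.47) in `Conv(ℝⁿ)`: for all convex subsets `x, y₁, …, y_{n+2}`
of `ℝⁿ`, `⋂ᵢ (x ∨ yᵢ) ≤ x ∨ ⋁_{(I₁,I₂)} ((⋁_{i∈I₁} yᵢ) ∧ (⋁_{i∈I₂} yᵢ))`, where `(I₁, I₂)`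
ranges over partitions of the index set into two nonempty parts. -/
theorem conv_radon_identity (n : ℕ) (x : Set (Fin n → ℝ))
    (y : Fin (n + 2) → Set (Fin n → ℝ))
    (hx : Convex ℝ x) (hy : ∀ i, Convex ℝ (y i)) :
    (⋂ i, convexHull ℝ (x ∪ y i)) ⊆
      convexHull ℝ (x ∪
        ⋃ (I : Set (Fin (n + 2)) × Set (Fin (n + 2)))
          (_ : I.1.Nonempty ∧ I.2.Nonempty ∧ Disjoint I.1 I.2 ∧ I.1 ∪ I.2 = Set.univ),
          (convexHull ℝ (⋃ i ∈ I.1, y i) ∩ convexHull ℝ (⋃ i ∈ I.2, y i))) := by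
  intro p hp
  rw [Set.mem_iInter] at hp
  set Z := ⋃ (I : Set (Fin (n + 2)) × Set (Fin (n + 2)))
          (_ : I.1.Nonempty ∧ I.2.Nonempty ∧ Disjoint I.1 I.2 ∧ I.1 ∪ I.2 = Set.univ),
          (convexHull ℝ (⋃ i ∈ I.1, y i) ∩ convexHull ℝ (⋃ i ∈ I.2, y i)) with hZ
  have hxsub : x ⊆ convexHull ℝ (x ∪ Z) :=
    (Set.subset_union_left).trans (subset_convexHull ℝ _)
  have hZsub : Z ⊆ convexHull ℝ (x ∪ Z) :=
    (Set.subset_union_right).trans (subset_convexHull ℝ _)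
  -- Case: x empty
  by_cases hxe : x.Nonempty
  swap
  · rw [Set.not_nonempty_iff_eq_empty] at hxe
    have hpy : ∀ i, p ∈ y i := by
      intro i
      have := hp i
      rwa [hxe, Set.empty_union, (hy i).convexHull_eq] at this
    apply hZsub
    rw [hZ]
    apply Set.mem_iUnion.2
    refine ⟨({0}, {0}ᶜ), Set.mem_iUnion.2 ⟨⟨Set.singleton_nonempty 0, ⟨1, by simp⟩,
      disjoint_compl_right, Set.union_compl_self _⟩, ?_⟩⟩
    constructor
    · exact subset_convexHull ℝ _ (Set.mem_biUnion rfl (hpy 0))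
    · exact subset_convexHull ℝ _ (Set.mem_biUnion (by simp) (hpy 1))
  -- Case: some y i empty
  by_cases hye : ∀ i, (y i).Nonempty
  swap
  · push_neg at hye
    obtain ⟨i, hi⟩ := hye
    have := hp i
    rw [hi, Set.union_empty, hx.convexHull_eq] at this
    exact hxsub this
  -- Main case
  have hseg : ∀ i, ∃ (a b : Fin n → ℝ) (u v : ℝ), a ∈ x ∧ b ∈ y i ∧ 0 ≤ u ∧ 0 ≤ v ∧ u + v = 1 ∧
      u • a + v • b = p := by
    intro i
    have := hp i
    rw [hx.convexHull_union (hy i) hxe (hye i)] at this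
    obtain ⟨a, ha, b, hb, u, v, hu, hv, huv, heq⟩ := mem_convexJoin.1 this
    exact ⟨a, b, u, v, ha, hb, hu, hv, huv, heq⟩
  choose a b u v ha hb hu hv huv heq using hseg
  by_cases hv0 : ∃ i, v i = 0
  · obtain ⟨i, hi⟩ := hv0
    have hu1 : u i = 1 := by have := huv i; rw [hi, add_zero] at this; exact this
    have : a i = p := by
      have h := heq i
      rwa [hi, zero_smul, add_zero, hu1, one_smul] at h
    exact hxsub (this ▸ ha i)
  push_neg at hv0
  have hvpos : ∀ i, 0 < v i := fun i => lt_of_le_of_ne (hv i) (Ne.symm (hv0 i))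
  -- Radon partition
  have hnai : ¬ AffineIndependent ℝ b := by
    intro h
    have h1 := h.finrank_vectorSpan_add_one
    have h2 : Module.finrank ℝ (vectorSpan ℝ (Set.range b)) ≤ n := by
      have := Submodule.finrank_le (vectorSpan ℝ (Set.range b))
      rwa [Module.finrank_fin_fun] at this
    rw [Fintype.card_fin] at h1
    omega
  obtain ⟨I, q, hqI, hqIc⟩ := Convex.radon_partition hnai
  have hIne : I.Nonempty := by
    rcases I.eq_empty_or_nonempty with h | h
    · rw [h] at hqI; simp at hqI
    · exact h
  have hIcne : Iᶜ.Nonempty := by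
    rcases Iᶜ.eq_empty_or_nonempty with h | h
    · rw [h] at hqIc; simp at hqIc
    · exact h
  -- q ∈ Z
  have hqZ : q ∈ Z := by
    rw [hZ]
    apply Set.mem_iUnion.2
    refine ⟨(I, Iᶜ), Set.mem_iUnion.2 ⟨⟨hIne, hIcne, disjoint_compl_right,
      Set.union_compl_self _⟩, ?_, ?_⟩⟩
    · exact convexHull_mono (by
        rintro _ ⟨i, hi, rfl⟩
        exact Set.mem_biUnion hi (hb i)) hqI
    · exact convexHull_mono (by
        rintro _ ⟨i, hi, rfl⟩
        exact Set.mem_biUnion hi (hb i)) hqIc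
  -- The auxiliary convex set S
  set S : Set (Fin n → ℝ) :=
    {z | ∃ t : ℝ, 0 ≤ t ∧ ∃ a' ∈ x, z + t • a' = (1 + t) • p} with hSdef
  have hS : Convex ℝ S := by
    rintro z₁ ⟨t₁, ht₁, a₁, ha₁, e₁⟩ z₂ ⟨t₂, ht₂, a₂, ha₂, e₂⟩ θ₁ θ₂ hθ₁ hθ₂ hθ
    have e₁' : z₁ = (1 + t₁) • p - t₁ • a₁ := by rw [← e₁]; abel
    have e₂' : z₂ = (1 + t₂) • p - t₂ • a₂ := by rw [← e₂]; abel
    rcases eq_or_lt_of_le (show (0:ℝ) ≤ θ₁ * t₁ + θ₂ * t₂ by positivity) with h0 | h0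
    · have h1 : θ₁ * t₁ = 0 := by nlinarith [mul_nonneg hθ₁ ht₁, mul_nonneg hθ₂ ht₂]
      have h2 : θ₂ * t₂ = 0 := by nlinarith [mul_nonneg hθ₁ ht₁, mul_nonneg hθ₂ ht₂]
      refine ⟨0, le_refl 0, a₁, ha₁, ?_⟩
      rw [e₁', e₂']
      match_scalars <;> ring_nf <;> linarith
    · set t := θ₁ * t₁ + θ₂ * t₂ with htdef
      refine ⟨t, le_of_lt h0, (θ₁ * t₁ / t) • a₁ + (θ₂ * t₂ / t) • a₂,
        hx ha₁ ha₂ (by positivity) (by positivity) (by field_simp; exact htdef.symm), ?_⟩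
      rw [e₁', e₂']
      match_scalars
      · ring_nf; linarith
      · field_simp; ring
      · field_simp; ring
  have hbS : ∀ i, b i ∈ S := by
    intro i
    refine ⟨u i / v i, div_nonneg (hu i) (hv i), a i, ha i, ?_⟩
    rw [← heq i]
    have hvne : v i ≠ 0 := ne_of_gt (hvpos i)
    have hui : u i = 1 - v i := by linarith [huv i]
    rw [hui]
    match_scalars <;> field_simp <;> ring
  have hqS : q ∈ S := by
    refine convexHull_min ?_ hS hqI
    rintro _ ⟨i, _, rfl⟩
    exact hbS i
  obtain ⟨t, ht, a', ha', heqq⟩ := hqS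
  have hfin : (1 / (1 + t)) • q + (t / (1 + t)) • a' = p := by
    have hq' : q = (1 + t) • p - t • a' := by rw [← heqq]; abel
    rw [hq']
    have h1t : (1:ℝ) + t ≠ 0 := by positivity
    match_scalars <;> field_simp <;> ring
  rw [← hfin]
  exact (convex_convexHull ℝ (x ∪ Z)) (hZsub hqZ) (hxsub ha')
    (by positivity) (by positivity) (by field_simp)
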